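/- Under the hypotheses of the general doubling construction, with V_n(x) = t_n^+ R_n(x) + t_{n−1}^− R_{n−1}(x) and π_x = τ_2 x² + τ_0, the odd polynomials satisfy Q_{2n+1}(x) = (τ_2 t_n^− x/(π_x − τ_0)) (V_{n+1}(π_x) + (t_n^+/t_n^−) V_n(π_x)) for all x ≠ 0. -/

import Mathlib

/-- In the general doubling construction, the odd polynomials `Q_{2n+1}(x) = x R_n(π_x)`
satisfy `Q_{2n+1}(x) = (τ₂ t_n^− x/(π_x − τ₀)) (V_{n+1}(π_x) + (t_n^+/t_n^−) V_n(π_x))`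
for all `x ≠ 0`. -/
theorem doubling_Qodd_V (N : ℕ) (hN : 1 ≤ N)
    (A C : ℤ → ℝ) (ε τ0 τ2 : ℝ) (hε : ε = 1 ∨ ε = -1) (hτ2 : τ2 ≠ 0)
    (R : ℤ → ℝ → ℝ)
    (hRm1 : ∀ x, R (-1) x = 0)
    (hR0 : ∀ x, R 0 x = 1)
    (hRrec : ∀ n : ℤ, 0 ≤ n → n ≤ (N : ℤ) - 1 → ∀ x : ℝ,
      x * R n x = ε * Real.sqrt (A n * C (n + 1)) * R (n + 1) x
        - (A n + C n) * R n x + ε * Real.sqrt (A (n - 1) * C n) * R (n - 1) x)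
    (tp tm : ℤ → ℝ)
    (htp0 : ∀ n : ℤ, 0 ≤ n → n ≤ (N : ℤ) - 1 → tp n ≠ 0)
    (htm0 : ∀ n : ℤ, 0 ≤ n → n ≤ (N : ℤ) - 1 → tm n ≠ 0)
    (htmm1 : tm (-1) = 0)
    (hcons1 : ∀ n : ℤ, 0 ≤ n → n ≤ (N : ℤ) - 1 →
      ε * Real.sqrt (A n * C (n + 1)) = τ2 * tm n * tp (n + 1))
    (hcons2 : ∀ n : ℤ, 0 ≤ n → n ≤ (N : ℤ) - 1 →
      A n + C n + τ0 = -τ2 * ((tp n) ^ 2 + (tm n) ^ 2))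
    (π : ℝ → ℝ) (hπ : ∀ x, π x = τ2 * x ^ 2 + τ0)
    (V : ℤ → ℝ → ℝ)
    (hV : ∀ (n : ℤ) (x : ℝ), V n x = tp n * R n x + tm (n - 1) * R (n - 1) x)
    (Qo : ℤ → ℝ → ℝ)
    (hQo : ∀ (n : ℤ) (x : ℝ), Qo n x = x * R n (π x)) :
    ∀ n : ℤ, 0 ≤ n → n ≤ (N : ℤ) - 1 → ∀ x : ℝ, x ≠ 0 →
      Qo n x = τ2 * tm n * x / (π x - τ0) * (V (n + 1) (π x) + tp n / tm n * V n (π x)) := by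
  intro n hn0 hn1 x hx
  have htm := htm0 n hn0 hn1
  have h2 := hcons2 n hn0 hn1
  have hrec := hRrec n hn0 hn1 (π x)
  rw [hcons1 n hn0 hn1] at hrec
  have hlast : ε * Real.sqrt (A (n - 1) * C n) * R (n - 1) (π x)
      = τ2 * tm (n - 1) * tp n * R (n - 1) (π x) := by
    rcases eq_or_lt_of_le hn0 with h | h
    · rw [← h, show (0:ℤ) - 1 = -1 by norm_num, hRm1, htmm1]; ring
    · have h1 := hcons1 (n - 1) (by omega) (by omega)
      rw [show n - 1 + 1 = n by ring] at h1
      rw [h1]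
  rw [hlast] at hrec
  have hy : π x = τ2 * x ^ 2 + τ0 := hπ x
  have key : τ2 * (x ^ 2 * R n (π x)) = τ2 * (tm n * V (n + 1) (π x) + tp n * V n (π x)) := by
    rw [hV, hV, show n + 1 - 1 = n by ring]
    have h2' : A n + C n = -τ2 * ((tp n) ^ 2 + (tm n) ^ 2) - τ0 := by linarith
    rw [hy, h2'] at hrec
    rw [hy]
    linear_combination hrec
  rw [hQo, hV, hV, show n + 1 - 1 = n by ring] at *
  rw [hy] at *
  rw [show τ2 * x ^ 2 + τ0 - τ0 = τ2 * x ^ 2 by ring]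
  generalize τ2 * x ^ 2 + τ0 = y at *
  field_simp
  linear_combination mul_left_cancel₀ hτ2 key
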